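/- Let $\vec p=(p_1,\dots,p_n)\in(0,1]^n$ and set $p_-:=\min_i p_i$. Then for any sequence $\{\lambda_i\}_{i\in\mathbb{N}}\subset\mathbb{C}$ and any sequence of anisotropic balls $\{B_i\}_{i\in\mathbb{N}}\subset\mathfrak B$, one has $\sum_{i\in\mathbb{N}}|\lambda_i|\le\big\|\{\sum_{i\in\mathbb{N}}[|\lambda_i|\chi_{B_i}/\|\chi_{B_i}\|_{L^{\vec p}(\mathbb{R}^n)}]^{p_-}\}^{1/p_-}\big\|_{L^{\vec p}(\mathbb{R}^n)}$. -/

import Mathlib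

open MeasureTheory ENNReal Filter

noncomputable section

/-- The anisotropic homogeneous quasi-norm associated with `a`. -/
def anorm {n : ℕ} (a x : Fin n → ℝ) : ℝ :=
  sInf {t : ℝ | 0 < t ∧ ∑ i, x i ^ 2 / t ^ (2 * a i) = 1}

/-- The anisotropic ball with center `x` and radius `r`. -/
def aball {n : ℕ} (a x : Fin n → ℝ) (r : ℝ) : Set (Fin n → ℝ) :=
  {y | anorm a (y - x) < r}

/-- The collection `𝔅` of all anisotropic balls. -/
def aballs {n : ℕ} (a : Fin n → ℝ) : Set (Set (Fin n → ℝ)) :=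
  {B | ∃ x r, 0 < r ∧ B = aball a x r}

/-- Iterated mixed-norm of a nonnegative function: integrate the first variable
with exponent `p 0` (essential supremum if `p 0 = ∞`), then recurse. -/
def mixedNormF : {n : ℕ} → (Fin n → ℝ≥0∞) → ((Fin n → ℝ) → ℝ≥0∞) → ℝ≥0∞
  | 0, _, f => f fun i => i.elim0
  | _ + 1, p, f =>
    mixedNormF (fun i => p i.succ) fun y =>
      if p 0 = ∞ then essSup (fun t => f (Fin.cons t y)) volume
      else (∫⁻ t, f (Fin.cons t y) ^ (p 0).toReal) ^ (1 / (p 0).toReal)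

/-- The mixed-norm Lebesgue quasi-norm `‖f‖_{L^{p⃗}(ℝⁿ)}`. -/
def mixedNorm {n : ℕ} (p : Fin n → ℝ≥0∞) (f : (Fin n → ℝ) → ℂ) : ℝ≥0∞ :=
  mixedNormF p fun x => (‖f x‖₊ : ℝ≥0∞)

/-- `‖χ_B‖_{L^{p⃗}(ℝⁿ)}`. -/
def chiNorm {n : ℕ} (p : Fin n → ℝ≥0∞) (B : Set (Fin n → ℝ)) : ℝ≥0∞ :=
  mixedNormF p (B.indicator fun _ => 1)

/-- `P` is (the function given by) a polynomial on `ℝⁿ` of total degree at most `s`. -/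
def IsPolyDeg {n : ℕ} (s : ℕ) (P : (Fin n → ℝ) → ℂ) : Prop :=
  ∃ Q : MvPolynomial (Fin n) ℂ, Q.totalDegree ≤ s ∧
    ∀ x, P x = MvPolynomial.eval (fun i => (x i : ℂ)) Q

/-- The anisotropic mixed-norm Campanato quasi-norm `‖g‖_{𝓛^{a⃗}_{p⃗,q,s}(ℝⁿ)}`. -/
def campanatoNorm {n : ℕ} (a : Fin n → ℝ) (p : Fin n → ℝ≥0∞) (q : ℝ≥0∞) (s : ℕ)
    (g : (Fin n → ℝ) → ℂ) : ℝ≥0∞ :=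
  ⨆ B ∈ aballs a, ⨅ P ∈ {P : (Fin n → ℝ) → ℂ | IsPolyDeg s P},
    volume B / chiNorm p B *
      (if q = ∞ then essSup (fun x => (‖g x - P x‖₊ : ℝ≥0∞)) (volume.restrict B)
       else ((volume B)⁻¹ * ∫⁻ x in B, (‖g x - P x‖₊ : ℝ≥0∞) ^ q.toReal) ^ (1 / q.toReal))

/-- Local `q`-integrability on `ℝⁿ`. -/
def LocLp {n : ℕ} (q : ℝ≥0∞) (g : (Fin n → ℝ) → ℂ) : Prop :=
  ∀ K : Set (Fin n → ℝ), IsCompact K → MemLp g q (volume.restrict K)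

/-- The homogeneous dimension `ν = a_1 + ⋯ + a_n`. -/
def nuTotal {n : ℕ} (a : Fin n → ℝ) : ℝ := ∑ i, a i

/-- `a₋ = min {a_1, …, a_n}`. -/
def aMin {n : ℕ} (a : Fin n → ℝ) : ℝ := ⨅ i, a i

/-- `p₋ = min {p_1, …, p_n}`. -/
def pMinE {n : ℕ} (p : Fin n → ℝ≥0∞) : ℝ≥0∞ := ⨅ i, p i

/-- An anisotropic mixed-norm `(p⃗, r, s)`-atom supported on the anisotropic ball `B`. -/
structure IsAtomFn {n : ℕ} (a : Fin n → ℝ) (p : Fin n → ℝ≥0∞) (r : ℝ≥0∞) (s : ℕ)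
    (f : (Fin n → ℝ) → ℂ) (B : Set (Fin n → ℝ)) : Prop where
  measurable : Measurable f
  ball_mem : B ∈ aballs a
  support_subset : Function.support f ⊆ B
  size : eLpNorm f r volume ≤ volume B ^ (1 / r).toReal / chiNorm p B
  moments : ∀ α : Fin n → ℕ, (∑ i, α i) ≤ s → (∫ x, f x * ∏ i, (x i : ℂ) ^ α i) = 0

/-- The quantity `‖{∑_i [|λ_i| χ_{B_i} / ‖χ_{B_i}‖]^{p₋}}^{1/p₋}‖_{L^{p⃗}}` for a sequence. -/
def atomSeqNorm {n : ℕ} (p : Fin n → ℝ≥0∞) (lam : ℕ → ℂ) (B : ℕ → Set (Fin n → ℝ)) : ℝ≥0∞ :=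
  mixedNormF p fun x =>
    (∑' i, ((‖lam i‖₊ : ℝ≥0∞) * (B i).indicator (fun _ => 1) x / chiNorm p (B i))
        ^ (pMinE p).toReal) ^ (1 / (pMinE p).toReal)

/-- The quantity `‖{∑_{i=1}^m [|λ_i| χ_{B_i} / ‖χ_{B_i}‖]^{p₋}}^{1/p₋}‖_{L^{p⃗}}`
for a finite family. -/
def atomFinNorm {n : ℕ} (p : Fin n → ℝ≥0∞) {m : ℕ} (lam : Fin m → ℂ)
    (B : Fin m → Set (Fin n → ℝ)) : ℝ≥0∞ :=
  mixedNormF p fun x =>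
    (∑ i, ((‖lam i‖₊ : ℝ≥0∞) * (B i).indicator (fun _ => 1) x / chiNorm p (B i))
        ^ (pMinE p).toReal) ^ (1 / (pMinE p).toReal)

/-- Tempered distributions on `ℝⁿ`. -/
abbrev TDist (n : ℕ) := SchwartzMap (Fin n → ℝ) ℂ →L[ℂ] ℂ

/-- `T = ∑_i λ_i a_i` in `𝒮'(ℝⁿ)` with the `a_i` being `(p⃗,r,s)`-atoms on balls `B i`. -/
def HasAtomicRep {n : ℕ} (a : Fin n → ℝ) (p : Fin n → ℝ≥0∞) (r : ℝ≥0∞) (s : ℕ)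
    (T : TDist n) (lam : ℕ → ℂ) (A : ℕ → (Fin n → ℝ) → ℂ)
    (B : ℕ → Set (Fin n → ℝ)) : Prop :=
  (∀ i, IsAtomFn a p r s (A i) (B i)) ∧
    ∀ φ : SchwartzMap (Fin n → ℝ) ℂ,
      Filter.Tendsto (fun N => ∑ i ∈ Finset.range N, lam i * ∫ x, A i x * φ x)
        Filter.atTop (nhds (T φ))

/-- Membership in the anisotropic mixed-norm atomic Hardy space. -/
def MemHardy {n : ℕ} (a : Fin n → ℝ) (p : Fin n → ℝ≥0∞) (r : ℝ≥0∞) (s : ℕ)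
    (T : TDist n) : Prop :=
  ∃ lam A B, HasAtomicRep a p r s T lam A B

/-- The atomic Hardy space quasi-norm. -/
def hardyNorm {n : ℕ} (a : Fin n → ℝ) (p : Fin n → ℝ≥0∞) (r : ℝ≥0∞) (s : ℕ)
    (T : TDist n) : ℝ≥0∞ :=
  ⨅ (lam : ℕ → ℂ) (A : ℕ → (Fin n → ℝ) → ℂ) (B : ℕ → Set (Fin n → ℝ))
    (_ : HasAtomicRep a p r s T lam A B), atomSeqNorm p lam B

/-- `‖L‖ = sup {|L f| : f ∈ H, ‖f‖_H ≤ 1}`. -/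
def hardyOpNorm {n : ℕ} (a : Fin n → ℝ) (p : Fin n → ℝ≥0∞) (r : ℝ≥0∞) (s : ℕ)
    (L : TDist n → ℂ) : ℝ≥0∞ :=
  ⨆ T ∈ {T : TDist n | MemHardy a p r s T ∧ hardyNorm a p r s T ≤ 1}, (‖L T‖₊ : ℝ≥0∞)

/-- `P = Π_B f` is the natural projection of `f` onto polynomials of degree at most `s`
relative to `B`. -/
def IsProj {n : ℕ} (s : ℕ) (B : Set (Fin n → ℝ)) (f P : (Fin n → ℝ) → ℂ) : Prop :=
  IsPolyDeg s P ∧ ∀ q : (Fin n → ℝ) → ℂ, IsPolyDeg s q →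
    (∫ x in B, P x * q x) = ∫ x in B, f x * q x

section AuxMixed

open Set

/-- Monotonicity of the iterated mixed norm functional. -/
theorem mixedNormF_mono : ∀ {n : ℕ} (p : Fin n → ℝ≥0∞) {f g : (Fin n → ℝ) → ℝ≥0∞},
    (∀ x, f x ≤ g x) → mixedNormF p f ≤ mixedNormF p g
  | 0, p, f, g, h => h _
  | n + 1, p, f, g, h => by
    simp only [mixedNormF]
    refine mixedNormF_mono _ fun y => ?_
    split_ifs
    · exact essSup_mono_ae (Filter.Eventually.of_forall fun t => h _)
    · exact ENNReal.rpow_le_rpow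
        (MeasureTheory.lintegral_mono fun t =>
          ENNReal.rpow_le_rpow (h _) ENNReal.toReal_nonneg)
        (one_div_nonneg.mpr ENNReal.toReal_nonneg)

/-- Homogeneity of the iterated mixed norm functional. -/
theorem mixedNormF_smul : ∀ {n : ℕ} (p : Fin n → ℝ≥0∞)
    (_ : ∀ i, p i ≠ 0 ∧ p i ≠ ∞) {c : ℝ≥0∞} (_ : c ≠ ∞) (f : (Fin n → ℝ) → ℝ≥0∞),
    mixedNormF p (fun x => c * f x) = c * mixedNormF p f
  | 0, p, hp, c, hc, f => rfl
  | n + 1, p, hp, c, hc, f => by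
    simp only [mixedNormF, if_neg (hp 0).2]
    rw [← mixedNormF_smul (fun i => p i.succ) (fun i => hp i.succ) hc]
    congr 1
    funext y
    set q := (p 0).toReal with hqdef
    have hq : 0 < q := ENNReal.toReal_pos (hp 0).1 (hp 0).2
    calc (∫⁻ t, (c * f (Fin.cons t y)) ^ q) ^ (1 / q)
        = (c ^ q * ∫⁻ t, f (Fin.cons t y) ^ q) ^ (1 / q) := by
          rw [← MeasureTheory.lintegral_const_mul' _ _
            (ENNReal.rpow_ne_top_of_nonneg hq.le hc)]
          simp_rw [ENNReal.mul_rpow_of_nonneg _ _ hq.le]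
      _ = c * (∫⁻ t, f (Fin.cons t y) ^ q) ^ (1 / q) := by
          rw [ENNReal.mul_rpow_of_nonneg _ _ (one_div_nonneg.mpr hq.le),
            ← ENNReal.rpow_mul, mul_one_div_cancel hq.ne', ENNReal.rpow_one]

/-- Pointwise weighted inequality used in the reverse Minkowski inequality. -/
theorem pw_weighted {lam1 lam2 : ℝ≥0∞} (h1 : lam1 ≠ 0) (h2 : lam2 ≠ 0)
    (hsum : lam1 + lam2 = 1) {q : ℝ} (hq : 0 < q) (hq1 : q ≤ 1) (x y : ℝ≥0∞) :
    lam1 ^ (1 - q) * x ^ q + lam2 ^ (1 - q) * y ^ q ≤ (x + y) ^ q := by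
  have h1t : lam1 ≠ ∞ := fun h => by simp [h] at hsum
  have h2t : lam2 ≠ ∞ := fun h => by simp [h, add_comm] at hsum
  have hp : (1 : ℝ) ≤ 1 / q := (le_div_iff₀ hq).2 (by linarith)
  have H := ENNReal.rpow_arith_mean_le_arith_mean2_rpow lam1 lam2
    ((x / lam1) ^ q) ((y / lam2) ^ q) hsum hp
  have hxq : ∀ (lam z : ℝ≥0∞), lam ≠ 0 → lam ≠ ∞ →
      lam * (z / lam) ^ q = lam ^ (1 - q) * z ^ q := by
    intro lam z hl hlt
    rw [ENNReal.div_rpow_of_nonneg _ _ hq.le, ENNReal.rpow_sub _ _ hl hlt,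
      ENNReal.rpow_one, div_eq_mul_inv, ENNReal.div_eq_inv_mul, ← mul_assoc,
      mul_comm lam, mul_assoc, mul_comm (lam ^ q)⁻¹]
    ring
  have hrec : ∀ (lam z : ℝ≥0∞), lam ≠ 0 → lam ≠ ∞ →
      lam * ((z / lam) ^ q) ^ (1 / q) = z := by
    intro lam z hl hlt
    rw [← ENNReal.rpow_mul, mul_one_div_cancel hq.ne', ENNReal.rpow_one,
      ENNReal.mul_div_cancel hl hlt]
  rw [hxq _ _ h1 h1t, hxq _ _ h2 h2t] at H
  rw [hrec _ _ h1 h1t, hrec _ _ h2 h2t] at H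
  calc lam1 ^ (1 - q) * x ^ q + lam2 ^ (1 - q) * y ^ q
      = ((lam1 ^ (1 - q) * x ^ q + lam2 ^ (1 - q) * y ^ q) ^ (1 / q)) ^ q := by
        rw [← ENNReal.rpow_mul, one_div_mul_cancel hq.ne', ENNReal.rpow_one]
    _ ≤ (x + y) ^ q := ENNReal.rpow_le_rpow H hq.le

/-- Reverse Minkowski inequality for `0 < q ≤ 1` (no measurability needed). -/
theorem rev_minkowski {α : Type*} [MeasurableSpace α] (μ : MeasureTheory.Measure α)
    {q : ℝ} (hq : 0 < q) (hq1 : q ≤ 1) (F G : α → ℝ≥0∞) :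
    (∫⁻ t, F t ^ q ∂μ) ^ (1 / q) + (∫⁻ t, G t ^ q ∂μ) ^ (1 / q)
      ≤ (∫⁻ t, (F t + G t) ^ q ∂μ) ^ (1 / q) := by
  set A := (∫⁻ t, F t ^ q ∂μ) ^ (1 / q) with hA
  set C := (∫⁻ t, G t ^ q ∂μ) ^ (1 / q) with hC
  have hmonoF : (∫⁻ t, F t ^ q ∂μ) ≤ ∫⁻ t, (F t + G t) ^ q ∂μ :=
    MeasureTheory.lintegral_mono fun t => ENNReal.rpow_le_rpow le_self_add hq.le
  have hmonoG : (∫⁻ t, G t ^ q ∂μ) ≤ ∫⁻ t, (F t + G t) ^ q ∂μ :=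
    MeasureTheory.lintegral_mono fun t => ENNReal.rpow_le_rpow le_add_self hq.le
  rcases eq_or_ne A 0 with h | hA0
  · rw [h, zero_add]; exact ENNReal.rpow_le_rpow hmonoG (one_div_nonneg.mpr hq.le)
  rcases eq_or_ne C 0 with h | hC0
  · rw [h, add_zero]; exact ENNReal.rpow_le_rpow hmonoF (one_div_nonneg.mpr hq.le)
  rcases eq_or_ne A ∞ with h | hAt
  · refine le_top.trans_eq ?_
    have : (∫⁻ t, F t ^ q ∂μ) = ∞ := by
      by_contra hne
      rw [hA] at h
      exact ENNReal.rpow_ne_top_of_nonneg (one_div_nonneg.mpr hq.le) hne h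
    rw [eq_comm, ENNReal.rpow_eq_top_iff_of_pos (one_div_pos.mpr hq)]
    exact top_le_iff.mp (this ▸ hmonoF)
  rcases eq_or_ne C ∞ with h | hCt
  · refine le_top.trans_eq ?_
    have : (∫⁻ t, G t ^ q ∂μ) = ∞ := by
      by_contra hne
      rw [hC] at h
      exact ENNReal.rpow_ne_top_of_nonneg (one_div_nonneg.mpr hq.le) hne h
    rw [eq_comm, ENNReal.rpow_eq_top_iff_of_pos (one_div_pos.mpr hq)]
    exact top_le_iff.mp (this ▸ hmonoG)
  -- main case
  have hACne : A + C ≠ 0 := by simp [hA0]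
  have hACt : A + C ≠ ∞ := by simp [hAt, hCt]
  set lam1 := A / (A + C) with hl1
  set lam2 := C / (A + C) with hl2
  have hsum : lam1 + lam2 = 1 := by
    rw [hl1, hl2, ENNReal.div_add_div_same, ENNReal.div_self hACne hACt]
  have hl10 : lam1 ≠ 0 := by
    simp [hl1, ENNReal.div_eq_zero_iff, hA0, hACt]
  have hl20 : lam2 ≠ 0 := by
    simp [hl2, ENNReal.div_eq_zero_iff, hC0, hACt]
  have key : (A + C) ^ q ≤ ∫⁻ t, (F t + G t) ^ q ∂μ := by
    have hAq : A ^ q = ∫⁻ t, F t ^ q ∂μ := by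
      rw [hA, ← ENNReal.rpow_mul, one_div_mul_cancel hq.ne', ENNReal.rpow_one]
    have hCq : C ^ q = ∫⁻ t, G t ^ q ∂μ := by
      rw [hC, ← ENNReal.rpow_mul, one_div_mul_cancel hq.ne', ENNReal.rpow_one]
    have step1 : lam1 ^ (1 - q) * A ^ q + lam2 ^ (1 - q) * C ^ q
        ≤ ∫⁻ t, (F t + G t) ^ q ∂μ := by
      rw [hAq, hCq, ← MeasureTheory.lintegral_const_mul' _ _
          (ENNReal.rpow_ne_top_of_nonneg (by linarith) (ENNReal.div_lt_top hAt hACne).ne),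
        ← MeasureTheory.lintegral_const_mul' _ _
          (ENNReal.rpow_ne_top_of_nonneg (by linarith) (ENNReal.div_lt_top hCt hACne).ne)]
      refine le_trans (MeasureTheory.le_lintegral_add _ _) (MeasureTheory.lintegral_mono fun t => ?_)
      exact pw_weighted hl10 hl20 hsum hq hq1 (F t) (G t)
    refine le_trans (le_of_eq ?_) step1
    have hterm : ∀ (X : ℝ≥0∞), X ≠ 0 → X ≠ ∞ →
        (X / (A + C)) ^ (1 - q) * X ^ q = X / (A + C) ^ (1 - q) := by
      intro X hX0 hXt
      rw [ENNReal.div_rpow_of_nonneg _ _ (by linarith), div_eq_mul_inv, mul_assoc,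
        mul_comm ((A + C) ^ (1 - q))⁻¹, ← mul_assoc, ← ENNReal.rpow_add _ _ hX0 hXt,
        ← div_eq_mul_inv]
      norm_num
    rw [hl1, hl2, hterm A hA0 hAt, hterm C hC0 hCt, ENNReal.div_add_div_same]
    conv_lhs => rw [show q = 1 - (1 - q) by ring]
    rw [ENNReal.rpow_sub _ _ hACne hACt, ENNReal.rpow_one]
  calc A + C = ((A + C) ^ q) ^ (1 / q) := by
        rw [← ENNReal.rpow_mul, mul_one_div_cancel hq.ne', ENNReal.rpow_one]
    _ ≤ _ := ENNReal.rpow_le_rpow key (one_div_nonneg.mpr hq.le)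

end AuxMixed
section AuxMixed2

open Set

/-- Binary superadditivity of the iterated mixed norm for exponents in `(0,1]`. -/
theorem mixedNormF_add_le : ∀ {n : ℕ} (p : Fin n → ℝ≥0∞)
    (_ : ∀ i, p i ≠ 0 ∧ p i ≠ ∞ ∧ p i ≤ 1) (f g : (Fin n → ℝ) → ℝ≥0∞),
    mixedNormF p f + mixedNormF p g ≤ mixedNormF p (fun x => f x + g x)
  | 0, p, hp, f, g => le_rfl
  | n + 1, p, hp, f, g => by
    simp only [mixedNormF, if_neg (hp 0).2.1]
    have hq : 0 < (p 0).toReal := ENNReal.toReal_pos (hp 0).1 (hp 0).2.1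
    have hq1 : (p 0).toReal ≤ 1 := by
      simpa using ENNReal.toReal_mono ENNReal.one_ne_top (hp 0).2.2
    refine le_trans (mixedNormF_add_le _ (fun i => hp i.succ) _ _) ?_
    refine mixedNormF_mono _ fun y => ?_
    exact rev_minkowski MeasureTheory.volume hq hq1 _ _

/-- Finset superadditivity. -/
theorem mixedNormF_sum_le {ι : Type*} {n : ℕ} (p : Fin n → ℝ≥0∞)
    (hp : ∀ i, p i ≠ 0 ∧ p i ≠ ∞ ∧ p i ≤ 1) (g : ι → (Fin n → ℝ) → ℝ≥0∞)
    (s : Finset ι) :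
    ∑ i ∈ s, mixedNormF p (g i) ≤ mixedNormF p (fun x => ∑ i ∈ s, g i x) := by
  classical
  induction s using Finset.induction_on with
  | empty => simp
  | insert _ _ hnotmem ih =>
    rename_i a s
    rw [Finset.sum_insert hnotmem]
    refine le_trans (add_le_add_right ih _) ?_
    refine le_trans (mixedNormF_add_le p hp _ _) (le_of_eq ?_)
    congr 1
    funext x
    rw [Finset.sum_insert hnotmem]

/-- Indicator to a positive real power. -/
theorem indicator_rpow {α : Type*} (A : Set α) (t : α) {q : ℝ} (hq : 0 < q) :
    (A.indicator (fun _ => (1 : ℝ≥0∞)) t) ^ q = A.indicator (fun _ => (1 : ℝ≥0∞)) t := by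
  by_cases h : t ∈ A <;> simp [h, ENNReal.zero_rpow_of_pos hq]

/-- The mixed norm of the indicator of an open box. -/
theorem mixedNormF_box : ∀ {n : ℕ} (p : Fin n → ℝ≥0∞)
    (_ : ∀ i, p i ≠ 0 ∧ p i ≠ ∞) (c d : Fin n → ℝ),
    mixedNormF p (Set.indicator {y | ∀ i, y i ∈ Set.Ioo (c i) (d i)} fun _ => (1 : ℝ≥0∞))
      = ∏ i, ENNReal.ofReal (d i - c i) ^ (1 / (p i).toReal)
  | 0, p, hp, c, d => by
    simp only [mixedNormF]
    rw [Set.indicator_of_mem]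
    · simp
    · intro i; exact i.elim0
  | n + 1, p, hp, c, d => by
    simp only [mixedNormF, if_neg (hp 0).2]
    have hq : 0 < (p 0).toReal := ENNReal.toReal_pos (hp 0).1 (hp 0).2
    set q := (p 0).toReal
    set S' : Set (Fin n → ℝ) := {y | ∀ i, y i ∈ Set.Ioo (c i.succ) (d i.succ)} with hS'
    have hker : ∀ (t : ℝ) (y : Fin n → ℝ),
        (Fin.cons t y ∈ {y : Fin (n+1) → ℝ | ∀ i, y i ∈ Set.Ioo (c i) (d i)}) ↔
          (t ∈ Set.Ioo (c 0) (d 0) ∧ y ∈ S') := by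
      intro t y
      constructor
      · intro h
        exact ⟨by simpa using h 0, fun j => by simpa using h j.succ⟩
      · rintro ⟨h1, h2⟩ i
        refine Fin.cases ?_ ?_ i
        · simpa using h1
        · intro j; simpa using h2 j
    have hstep : ∀ y : Fin n → ℝ,
        (∫⁻ t, (Set.indicator {y : Fin (n+1) → ℝ | ∀ i, y i ∈ Set.Ioo (c i) (d i)}
            (fun _ => (1 : ℝ≥0∞)) (Fin.cons t y)) ^ q) ^ (1 / q)
          = ENNReal.ofReal (d 0 - c 0) ^ (1 / q) * S'.indicator (fun _ => (1 : ℝ≥0∞)) y := by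
      intro y
      by_cases hy : y ∈ S'
      · have : ∀ t : ℝ, Set.indicator {y : Fin (n+1) → ℝ | ∀ i, y i ∈ Set.Ioo (c i) (d i)}
            (fun _ => (1 : ℝ≥0∞)) (Fin.cons t y)
              = Set.indicator (Set.Ioo (c 0) (d 0)) (fun _ => (1 : ℝ≥0∞)) t := by
          intro t
          by_cases ht : t ∈ Set.Ioo (c 0) (d 0)
          · rw [Set.indicator_of_mem ((hker t y).2 ⟨ht, hy⟩), Set.indicator_of_mem ht]
          · rw [Set.indicator_of_notMem (fun hmem => ht ((hker t y).1 hmem).1),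
              Set.indicator_of_notMem ht]
        simp_rw [this, indicator_rpow _ _ hq]
        rw [MeasureTheory.lintegral_indicator measurableSet_Ioo,
          MeasureTheory.setLIntegral_one, Real.volume_Ioo,
          Set.indicator_of_mem hy, mul_one]
      · have : ∀ t : ℝ, Set.indicator {y : Fin (n+1) → ℝ | ∀ i, y i ∈ Set.Ioo (c i) (d i)}
            (fun _ => (1 : ℝ≥0∞)) (Fin.cons t y) = 0 := by
          intro t
          exact Set.indicator_of_notMem (fun hmem => hy ((hker t y).1 hmem).2) _
        simp_rw [this]
        rw [Set.indicator_of_notMem hy, mul_zero]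
        have h0 : (0 : ℝ≥0∞) ^ q = 0 := ENNReal.zero_rpow_of_pos hq
        simp only [h0, MeasureTheory.lintegral_zero]
        exact ENNReal.zero_rpow_of_pos (one_div_pos.mpr hq)
    calc mixedNormF (fun i => p i.succ)
          (fun y => (∫⁻ t, (Set.indicator {y : Fin (n+1) → ℝ | ∀ i, y i ∈ Set.Ioo (c i) (d i)}
            (fun _ => (1 : ℝ≥0∞)) (Fin.cons t y)) ^ q) ^ (1 / q))
        = mixedNormF (fun i => p i.succ)
            (fun y => ENNReal.ofReal (d 0 - c 0) ^ (1 / q) *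
              S'.indicator (fun _ => (1 : ℝ≥0∞)) y) := by
          congr 1; funext y; exact hstep y
      _ = ENNReal.ofReal (d 0 - c 0) ^ (1 / q) *
            mixedNormF (fun i => p i.succ) (S'.indicator fun _ => (1 : ℝ≥0∞)) := by
          exact mixedNormF_smul _ (fun i => hp i.succ)
            (ENNReal.rpow_ne_top_of_nonneg (one_div_nonneg.mpr hq.le) ENNReal.ofReal_ne_top) _
      _ = ∏ i, ENNReal.ofReal (d i - c i) ^ (1 / (p i).toReal) := by
          rw [mixedNormF_box _ (fun i => hp i.succ) (fun i => c i.succ) (fun i => d i.succ),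
            Fin.prod_univ_succ]

end AuxMixed2
section AuxGeom

open Set

variable {n : ℕ}

/-- Existence of a root of `t ↦ ∑ z i ^ 2 / t ^ (2 a i) = 1` below any point where the
sum is `< 1`. -/
theorem exists_root_lt (a : Fin n → ℝ) (ha : ∀ i, 1 ≤ a i) {z : Fin n → ℝ} (hz : z ≠ 0)
    {b : ℝ} (hb : 0 < b) (hgb : ∑ i, z i ^ 2 / b ^ (2 * a i) < 1) :
    ∃ t, (0 < t ∧ ∑ i, z i ^ 2 / t ^ (2 * a i) = 1) ∧ t < b := by
  obtain ⟨j, hj0⟩ := Function.ne_iff.1 hz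
  have hj : z j ≠ 0 := by simpa using hj0
  have hw : 0 < z j ^ 2 := by positivity
  have he : 0 < 2 * a j := by have := ha j; linarith
  set t₁ := min b ((z j ^ 2) ^ (1 / (2 * a j))) with ht₁def
  have ht₁b : t₁ ≤ b := min_le_left _ _
  have ht₁0 : 0 < t₁ := lt_min hb (Real.rpow_pos_of_pos hw _)
  have hgt₁ : 1 ≤ ∑ i, z i ^ 2 / t₁ ^ (2 * a i) := by
    have hle : t₁ ^ (2 * a j) ≤ z j ^ 2 := by
      have h1 : t₁ ^ (2 * a j) ≤ ((z j ^ 2) ^ (1 / (2 * a j))) ^ (2 * a j) :=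
        Real.rpow_le_rpow ht₁0.le (min_le_right _ _) he.le
      rwa [← Real.rpow_mul hw.le, one_div_mul_cancel he.ne', Real.rpow_one] at h1
    have h1 : 1 ≤ z j ^ 2 / t₁ ^ (2 * a j) :=
      (one_le_div (Real.rpow_pos_of_pos ht₁0 _)).2 hle
    refine h1.trans ?_
    exact Finset.single_le_sum (f := fun i => z i ^ 2 / t₁ ^ (2 * a i))
      (fun i _ => by positivity) (Finset.mem_univ j)
  have hcont : ContinuousOn (fun t : ℝ => ∑ i, z i ^ 2 / t ^ (2 * a i)) (Set.Icc t₁ b) := by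
    refine continuousOn_finset_sum _ fun i _ => ContinuousOn.div continuousOn_const ?_ ?_
    · intro t ht
      exact (Real.continuousAt_rpow_const t _
        (Or.inl (ne_of_gt (lt_of_lt_of_le ht₁0 ht.1)))).continuousWithinAt
    · intro t ht
      exact (Real.rpow_pos_of_pos (lt_of_lt_of_le ht₁0 ht.1) _).ne'
  have hmem : (1 : ℝ) ∈ Set.Icc (∑ i, z i ^ 2 / b ^ (2 * a i))
      (∑ i, z i ^ 2 / t₁ ^ (2 * a i)) := ⟨hgb.le, hgt₁⟩
  obtain ⟨t, htmem, htval⟩ := intermediate_value_Icc' ht₁b hcont hmem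
  refine ⟨t, ⟨lt_of_lt_of_le ht₁0 htmem.1, htval⟩, lt_of_le_of_ne htmem.2 fun h => ?_⟩
  rw [h] at htval
  exact hgb.ne htval

/-- Strict decrease of the defining sum. -/
theorem sum_root_lt (a : Fin n → ℝ) (ha : ∀ i, 1 ≤ a i) {z : Fin n → ℝ}
    {j : Fin n} (hj : z j ≠ 0) {t r : ℝ} (ht : 0 < t) (htr : t < r) :
    ∑ i, z i ^ 2 / r ^ (2 * a i) < ∑ i, z i ^ 2 / t ^ (2 * a i) := by
  have hr : 0 < r := ht.trans htr
  refine Finset.sum_lt_sum (fun i _ => ?_) ⟨j, Finset.mem_univ j, ?_⟩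
  · have hpow : t ^ (2 * a i) ≤ r ^ (2 * a i) :=
      Real.rpow_le_rpow ht.le htr.le (by have := ha i; linarith)
    exact div_le_div_of_nonneg_left (sq_nonneg _) (Real.rpow_pos_of_pos ht _) hpow
  · have hpow : t ^ (2 * a j) < r ^ (2 * a j) :=
      Real.rpow_lt_rpow ht.le htr (by have := ha j; linarith)
    have hw : 0 < z j ^ 2 := by positivity

    exact div_lt_div_of_pos_left hw (Real.rpow_pos_of_pos ht _) hpow

/-- Characterization of membership in an anisotropic ball. -/
theorem anorm_lt_iff (a : Fin n → ℝ) (ha : ∀ i, 1 ≤ a i) {z : Fin n → ℝ} {r : ℝ}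
    (hr : 0 < r) : anorm a z < r ↔ ∑ i, z i ^ 2 / r ^ (2 * a i) < 1 := by
  by_cases hz : z = 0
  · subst hz
    have hset : {t : ℝ | 0 < t ∧ ∑ i, (0 : Fin n → ℝ) i ^ 2 / t ^ (2 * a i) = 1} = ∅ := by
      ext t; simp
    have h0 : anorm a (0 : Fin n → ℝ) = 0 := by rw [anorm, hset, Real.sInf_empty]
    simp [h0, hr]
  · have hbdd : BddBelow {t : ℝ | 0 < t ∧ ∑ i, z i ^ 2 / t ^ (2 * a i) = 1} :=
      ⟨0, fun x hx => hx.1.le⟩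
    obtain ⟨j, hj0⟩ := Function.ne_iff.1 hz
    have hj : z j ≠ 0 := by simpa using hj0
    constructor
    · intro h
      have hT : 0 ≤ ∑ i, z i ^ 2 := Finset.sum_nonneg fun i _ => sq_nonneg _
      set T := ∑ i, z i ^ 2 with hTdef
      set b := max 1 (T + 1) with hbdef
      have hb1 : (1 : ℝ) ≤ b := le_max_left _ _
      have hb0 : (0 : ℝ) < b := lt_of_lt_of_le one_pos hb1
      have hgb : ∑ i, z i ^ 2 / b ^ (2 * a i) < 1 := by
        have hterm : ∀ i, z i ^ 2 / b ^ (2 * a i) ≤ z i ^ 2 / (T + 1) := by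
          intro i
          have h1 : (T + 1 : ℝ) ≤ b ^ (2 * a i) := by
            have h2 : b ^ (1 : ℝ) ≤ b ^ (2 * a i) :=
              Real.rpow_le_rpow_of_exponent_le hb1 (by have := ha i; linarith)
            rw [Real.rpow_one] at h2
            exact le_trans (le_max_right _ _) h2
          exact div_le_div_of_nonneg_left (sq_nonneg _) (by linarith) h1
        calc ∑ i, z i ^ 2 / b ^ (2 * a i) ≤ ∑ i, z i ^ 2 / (T + 1) :=
              Finset.sum_le_sum fun i _ => hterm i
          _ = T / (T + 1) := by rw [← Finset.sum_div]
          _ < 1 := (div_lt_one (by linarith)).2 (by linarith)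
      obtain ⟨t₀, ht₀, _⟩ := exists_root_lt a ha hz hb0 hgb
      rw [anorm] at h
      obtain ⟨t, ht, htr⟩ := (csInf_lt_iff hbdd ⟨t₀, ht₀⟩).1 h
      calc ∑ i, z i ^ 2 / r ^ (2 * a i) < ∑ i, z i ^ 2 / t ^ (2 * a i) :=
            sum_root_lt a ha hj ht.1 htr
        _ = 1 := ht.2
    · intro h
      obtain ⟨t, ht, htr⟩ := exists_root_lt a ha hz hr h
      exact lt_of_le_of_lt (csInf_le hbdd ht) htr

end AuxGeom
section AuxBall

open Set

variable {n : ℕ}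

/-- An anisotropic ball is contained in a box. -/
theorem aball_subset_box (a : Fin n → ℝ) (ha : ∀ i, 1 ≤ a i) (x : Fin n → ℝ) {r : ℝ}
    (hr : 0 < r) :
    aball a x r ⊆ {y | ∀ i, y i ∈ Set.Ioo (x i - (r ^ (a i) + 1)) (x i + (r ^ (a i) + 1))} := by
  intro y hy
  have h : ∑ i, (y i - x i) ^ 2 / r ^ (2 * a i) < 1 := by
    have := (anorm_lt_iff a ha hr).1 hy
    simpa [Pi.sub_apply] using this
  intro i
  have hterm : (y i - x i) ^ 2 / r ^ (2 * a i) < 1 := by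
    refine lt_of_le_of_lt ?_ h
    exact Finset.single_le_sum (f := fun i => (y i - x i) ^ 2 / r ^ (2 * a i))
      (fun i _ => by positivity) (Finset.mem_univ i)
  have hr2 : r ^ (2 * a i) = (r ^ (a i)) ^ 2 := by
    rw [two_mul, Real.rpow_add hr, sq]
  have hsq : (y i - x i) ^ 2 < (r ^ (a i)) ^ 2 := by
    rw [hr2] at hterm
    rwa [div_lt_one (by positivity)] at hterm
  obtain ⟨h1, h2⟩ := abs_lt_of_sq_lt_sq' hsq (Real.rpow_pos_of_pos hr _).le
  rw [Set.mem_Ioo]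
  constructor <;> nlinarith

/-- An anisotropic ball contains a box. -/
theorem box_subset_aball (hn : 0 < n) (a : Fin n → ℝ) (ha : ∀ i, 1 ≤ a i)
    (x : Fin n → ℝ) {r : ℝ} (hr : 0 < r) :
    ∃ δ : ℝ, 0 < δ ∧
      {y | ∀ i, y i ∈ Set.Ioo (x i - δ) (x i + δ)} ⊆ aball a x r := by
  haveI : Nonempty (Fin n) := ⟨⟨0, hn⟩⟩
  set m := Finset.univ.inf' Finset.univ_nonempty (fun i => r ^ (a i)) with hmdef
  have hm : 0 < m := (Finset.lt_inf'_iff _).2 fun i _ => Real.rpow_pos_of_pos hr _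
  set δ := m / (n + 1) with hδdef
  have hδ : 0 < δ := by positivity
  refine ⟨δ, hδ, fun y hy => ?_⟩
  have hgoal : ∑ i, (y i - x i) ^ 2 / r ^ (2 * a i) < 1 := by
    have hterm : ∀ i : Fin n, (y i - x i) ^ 2 / r ^ (2 * a i) < 1 / ((n : ℝ) + 1) ^ 2 := by
      intro i
      have hyi := hy i
      simp only [Set.mem_Ioo] at hyi
      have hsq : (y i - x i) ^ 2 < δ ^ 2 := sq_lt_sq' (by linarith [hyi.1]) (by linarith [hyi.2])
      have hr2 : r ^ (2 * a i) = (r ^ (a i)) ^ 2 := by rw [two_mul, Real.rpow_add hr, sq]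
      have hmle : m ≤ r ^ (a i) := Finset.inf'_le _ (Finset.mem_univ i)
      have hm2 : m ^ 2 ≤ r ^ (2 * a i) := by
        rw [hr2]; exact pow_le_pow_left₀ hm.le hmle 2
      calc (y i - x i) ^ 2 / r ^ (2 * a i) < δ ^ 2 / r ^ (2 * a i) := by
            rw [div_lt_div_iff_of_pos_right (by positivity)]
            exact hsq
        _ ≤ δ ^ 2 / m ^ 2 :=
            div_le_div_of_nonneg_left (sq_nonneg _) (by positivity) hm2
        _ = 1 / ((n : ℝ) + 1) ^ 2 := by
            rw [hδdef]
            field_simp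
    calc ∑ i, (y i - x i) ^ 2 / r ^ (2 * a i)
        < ∑ _i : Fin n, 1 / ((n : ℝ) + 1) ^ 2 :=
          Finset.sum_lt_sum_of_nonempty Finset.univ_nonempty fun i _ => hterm i
      _ = (n : ℝ) / ((n : ℝ) + 1) ^ 2 := by
          rw [Finset.sum_const, Finset.card_univ, Fintype.card_fin, nsmul_eq_mul]
          ring
      _ < 1 := by
          rw [div_lt_one (by positivity)]
          nlinarith [Nat.cast_nonneg (α := ℝ) n]
  show anorm a (y - x) < r
  rw [anorm_lt_iff a ha hr]
  simpa [Pi.sub_apply] using hgoal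

/-- The mixed norm of the indicator of an anisotropic ball is positive and finite. -/
theorem chiNorm_pos_ne_top (hn : 0 < n) (a : Fin n → ℝ) (ha : ∀ i, 1 ≤ a i)
    (p : Fin n → ℝ≥0∞) (hp : ∀ i, p i ≠ 0 ∧ p i ≠ ∞) {B : Set (Fin n → ℝ)}
    (hB : B ∈ aballs a) : chiNorm p B ≠ 0 ∧ chiNorm p B ≠ ∞ := by
  obtain ⟨x, r, hr, rfl⟩ := hB
  constructor
  · -- positivity
    obtain ⟨δ, hδ, hsub⟩ := box_subset_aball hn a ha x hr
    have hle : mixedNormF p (Set.indicator {y | ∀ i, y i ∈ Set.Ioo (x i - δ) (x i + δ)}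
        fun _ => (1 : ℝ≥0∞)) ≤ chiNorm p (aball a x r) := by
      refine mixedNormF_mono p fun w => ?_
      by_cases hw : w ∈ {y | ∀ i, y i ∈ Set.Ioo (x i - δ) (x i + δ)}
      · rw [Set.indicator_of_mem hw, Set.indicator_of_mem (hsub hw)]
      · rw [Set.indicator_of_notMem hw]; exact zero_le
    rw [mixedNormF_box p hp (fun i => x i - δ) (fun i => x i + δ)] at hle
    intro h0
    rw [h0] at hle
    have : ∀ i : Fin n, ENNReal.ofReal (x i + δ - (x i - δ)) ^ (1 / (p i).toReal) ≠ 0 := by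
      intro i
      refine (ENNReal.rpow_pos ?_ ENNReal.ofReal_ne_top).ne'
      rw [ENNReal.ofReal_pos]
      linarith
    exact (Finset.prod_ne_zero_iff.2 fun i _ => this i) (le_antisymm hle zero_le)
  · -- finiteness
    have hle : chiNorm p (aball a x r) ≤ mixedNormF p
        (Set.indicator {y | ∀ i, y i ∈
          Set.Ioo (x i - (r ^ (a i) + 1)) (x i + (r ^ (a i) + 1))} fun _ => (1 : ℝ≥0∞)) := by
      refine mixedNormF_mono p fun w => ?_
      by_cases hw : w ∈ aball a x r
      · rw [Set.indicator_of_mem hw, Set.indicator_of_mem (aball_subset_box a ha x hr hw)]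
      · rw [Set.indicator_of_notMem hw]; exact zero_le
    rw [mixedNormF_box p hp _ _] at hle
    refine ne_top_of_le_ne_top ?_ hle
    refine (ENNReal.prod_lt_top fun i _ => ?_).ne
    exact ENNReal.rpow_lt_top_of_nonneg (one_div_nonneg.mpr ENNReal.toReal_nonneg)
      ENNReal.ofReal_ne_top

end AuxBall
section AuxFinal

/-- `ℓ¹`-`ℓ^q` inequality for `0 < q ≤ 1`. -/
theorem tsum_le_rpow_tsum (u : ℕ → ℝ≥0∞) {q : ℝ} (hq : 0 < q) (hq1 : q ≤ 1) :
    ∑' i, u i ≤ (∑' i, u i ^ q) ^ (1 / q) := by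
  rw [ENNReal.tsum_eq_iSup_sum]
  refine iSup_le fun s => ?_
  have hfin : (∑ i ∈ s, u i) ^ q ≤ ∑ i ∈ s, u i ^ q := by
    classical
    induction s using Finset.induction_on with
    | empty => simp [ENNReal.zero_rpow_of_pos hq]
    | insert _ _ hnot ih =>
      rename_i b s
      rw [Finset.sum_insert hnot, Finset.sum_insert hnot]
      exact le_trans (ENNReal.rpow_add_le_add_rpow _ _ hq.le hq1) (add_le_add_right ih _)
  calc ∑ i ∈ s, u i = ((∑ i ∈ s, u i) ^ q) ^ (1 / q) := by
        rw [← ENNReal.rpow_mul, mul_one_div_cancel hq.ne', ENNReal.rpow_one]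
    _ ≤ (∑' i, u i ^ q) ^ (1 / q) :=
        ENNReal.rpow_le_rpow (le_trans hfin (ENNReal.sum_le_tsum s))
          (one_div_nonneg.mpr hq.le)

end AuxFinal

theorem statement3 {n : ℕ} (hn : 0 < n) (a : Fin n → ℝ) (ha : ∀ i, 1 ≤ a i)
    (p : Fin n → ℝ≥0∞) (hp0 : ∀ i, 0 < p i) (hp1 : ∀ i, p i ≤ 1)
    (lam : ℕ → ℂ) (B : ℕ → Set (Fin n → ℝ)) (hB : ∀ i, B i ∈ aballs a) :
    ∑' i, (‖lam i‖₊ : ℝ≥0∞) ≤ atomSeqNorm p lam B := by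
  haveI : Nonempty (Fin n) := ⟨⟨0, hn⟩⟩
  have hptop : ∀ i, p i ≠ ∞ := fun i =>
    ne_top_of_le_ne_top ENNReal.one_ne_top (hp1 i)
  have hpne : ∀ i, p i ≠ 0 ∧ p i ≠ ∞ ∧ p i ≤ 1 := fun i => ⟨(hp0 i).ne', hptop i, hp1 i⟩
  obtain ⟨j, -, hj⟩ := Finset.exists_min_image Finset.univ p
    ⟨⟨0, hn⟩, Finset.mem_univ _⟩
  have hmin : pMinE p = p j :=
    le_antisymm (iInf_le _ j) (le_iInf fun i => hj i (Finset.mem_univ i))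
  have hq : 0 < (pMinE p).toReal := by
    rw [hmin]; exact ENNReal.toReal_pos (hp0 j).ne' (hptop j)
  have hq1 : (pMinE p).toReal ≤ 1 := by
    rw [hmin]
    simpa using ENNReal.toReal_mono ENNReal.one_ne_top (hp1 j)
  set g : ℕ → (Fin n → ℝ) → ℝ≥0∞ := fun i x =>
    (‖lam i‖₊ : ℝ≥0∞) * (B i).indicator (fun _ => 1) x / chiNorm p (B i) with hgdef
  have hgnorm : ∀ i, mixedNormF p (g i) = (‖lam i‖₊ : ℝ≥0∞) := by
    intro i
    obtain ⟨hchi0, hchit⟩ := chiNorm_pos_ne_top hn a ha p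
      (fun i => ⟨(hpne i).1, (hpne i).2.1⟩) (hB i)
    have hrw : g i = fun x => ((‖lam i‖₊ : ℝ≥0∞) / chiNorm p (B i)) *
        (B i).indicator (fun _ => 1) x := by
      funext x
      rw [hgdef]
      simp only [div_eq_mul_inv, mul_right_comm]
    rw [hrw, mixedNormF_smul p (fun i => ⟨(hpne i).1, (hpne i).2.1⟩)
      (ENNReal.div_lt_top ENNReal.coe_ne_top hchi0).ne _]
    show (‖lam i‖₊ : ℝ≥0∞) / chiNorm p (B i) * chiNorm p (B i) = _
    exact ENNReal.div_mul_cancel hchi0 hchit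
  rw [ENNReal.tsum_eq_iSup_sum]
  refine iSup_le fun s => ?_
  calc ∑ i ∈ s, (‖lam i‖₊ : ℝ≥0∞) = ∑ i ∈ s, mixedNormF p (g i) := by
        exact Finset.sum_congr rfl fun i _ => (hgnorm i).symm
    _ ≤ mixedNormF p (fun x => ∑ i ∈ s, g i x) := mixedNormF_sum_le p hpne g s
    _ ≤ mixedNormF p (fun x => ∑' i, g i x) :=
        mixedNormF_mono p fun x => ENNReal.sum_le_tsum s
    _ ≤ atomSeqNorm p lam B := by
        refine mixedNormF_mono p fun x => ?_
        exact tsum_le_rpow_tsum (fun i => g i x) hq hq1
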